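/- A non-empty regular language L with p positive atoms has a trim reduced atomic NFA with 2^p − 1 states if and only if some left quotient K_i of L equals the union A_0 ∪ ⋯ ∪ A_{p−1} of all positive atoms of L. -/
import Mathlib

/-! Basic definitions: left quotients, atoms, and operations on finite automata. -/

/-- The left quotient of a language `L` by a word `w`: `w⁻¹L = {x | w ++ x ∈ L}`. -/
def leftQuot {α : Type} (L : Language α) (w : List α) : Language α := {x | w ++ x ∈ L}

/-- The set of all left quotients of `L`. -/
def quots {α : Type} (L : Language α) : Set (Language α) := {K | ∃ w : List α, K = leftQuot L w}

/-- `A` is an atom of `L`: a non-empty intersection `K̃_0 ∩ ⋯ ∩ K̃_{n−1}` where each `K̃_i` is a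
quotient `K_i` of `L` or its complement (`S` is the set of uncomplemented quotients, so a word is
in the intersection iff it belongs exactly to the quotients in `S`). -/
def IsAtomOf {α : Type} (L A : Language α) : Prop :=
  (∃ x, x ∈ A) ∧ ∃ S : Set (Language α), S ⊆ quots L ∧
    A = {x | ∀ K ∈ quots L, (x ∈ K ↔ K ∈ S)}

/-- A positive atom: at least one term of its defining intersection is uncomplemented,
equivalently the atom is contained in some quotient of `L`. -/
def IsPositiveAtomOf {α : Type} (L A : Language α) : Prop :=
  IsAtomOf L A ∧ ∃ K ∈ quots L, ∀ x ∈ A, x ∈ K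

namespace NFA

/-- The right language of a state `q`: words accepted starting from `q`. -/
def rightLang {α σ : Type} (M : NFA α σ) (q : σ) : Language α :=
  {w | ∃ p ∈ M.accept, p ∈ M.evalFrom {q} w}

/-- The left language of a state `q`: words leading from the initial states to `q`. -/
def leftLang {α σ : Type} (M : NFA α σ) (q : σ) : Language α :=
  {w | q ∈ M.eval w}

/-- An NFA is trim if every state has a non-empty left language and right language. -/
def IsTrim {α σ : Type} (M : NFA α σ) : Prop :=
  ∀ q, (∃ w, w ∈ M.leftLang q) ∧ (∃ w, w ∈ M.rightLang q)

/-- An NFA is reduced if distinct states have distinct right languages. -/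
def IsReduced {α σ : Type} (M : NFA α σ) : Prop :=
  ∀ q p, M.rightLang q = M.rightLang p → q = p

/-- An NFA is atomic if the right language of every state is a union of positive atoms of the
accepted language. -/
def IsAtomic {α σ : Type} (M : NFA α σ) : Prop :=
  ∀ q, ∃ 𝒜 : Set (Language α), (∀ A ∈ 𝒜, IsPositiveAtomOf M.accepts A) ∧
    M.rightLang q = {w | ∃ A ∈ 𝒜, w ∈ A}

/-- Reversal of an NFA: interchange initial and final states and reverse all transitions. -/
def rev {α σ : Type} (M : NFA α σ) : NFA α σ :=
  ⟨fun q a => {p | q ∈ M.step p a}, M.accept, M.start⟩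

/-- States of the determinization of an NFA: the subsets of states reachable from the initial
subset. -/
def detStates {α σ : Type} (M : NFA α σ) : Type := {S : Set σ // ∃ w, M.eval w = S}

instance {α σ : Type} [Finite σ] (M : NFA α σ) : Finite M.detStates :=
  Subtype.finite

/-- Determinization of an NFA by the subset construction, keeping only the subsets reachable
from the initial subset. -/
def det {α σ : Type} (M : NFA α σ) : DFA α M.detStates where
  step S a := ⟨M.stepSet S.1 a, by
    obtain ⟨w, hw⟩ := S.2
    exact ⟨w ++ [a], by rw [NFA.eval_append_singleton, hw]⟩⟩
  start := ⟨M.start, [], rfl⟩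
  accept := {S | ∃ p ∈ M.accept, p ∈ S.1}

end NFA

/-- Reversal of a DFA, yielding an NFA. -/
def DFA.rev {α σ : Type} (M : DFA α σ) : NFA α σ :=
  ⟨fun q a => {p | M.step p a = q}, M.accept, {M.start}⟩

/-- A DFA is minimal if no DFA accepting the same language has fewer states. -/
def DFA.IsMinimal {α σ : Type} (M : DFA α σ) : Prop :=
  ∀ (σ' : Type) (_ : Finite σ') (M' : DFA α σ'), M'.accepts = M.accepts →
    Nat.card σ ≤ Nat.card σ'


namespace Aux15

open Set

variable {α : Type}

@[simp] lemma mem_leftQuot {L : Language α} {v x : List α} :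
    x ∈ leftQuot L v ↔ v ++ x ∈ L := Iff.rfl

lemma leftQuot_nil (L : Language α) : leftQuot L [] = L := rfl

lemma L_mem_quots (L : Language α) : L ∈ quots L := ⟨[], (leftQuot_nil L).symm⟩

/-- The atom of a word: all words with the same quotient-membership profile. -/
def atomOf (L : Language α) (x : List α) : Language α :=
  {y | ∀ K ∈ quots L, (y ∈ K ↔ x ∈ K)}

lemma mem_atomOf_self (L : Language α) (x : List α) : x ∈ atomOf L x := fun _ _ => Iff.rfl

lemma mem_atomOf {L : Language α} {x y : List α} :
    y ∈ atomOf L x ↔ ∀ v : List α, (v ++ y ∈ L ↔ v ++ x ∈ L) := by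
  constructor
  · intro h v; exact h (leftQuot L v) ⟨v, rfl⟩
  · rintro h K ⟨v, rfl⟩; exact h v

lemma isAtomOf_atomOf (L : Language α) (x : List α) : IsAtomOf L (atomOf L x) := by
  refine ⟨⟨x, mem_atomOf_self L x⟩, {K | K ∈ quots L ∧ x ∈ K}, fun K hK => hK.1, ?_⟩
  ext y
  simp only [atomOf, Set.mem_setOf_eq]
  constructor
  · intro h K hK; rw [h K hK]; exact ⟨fun hx => ⟨hK, hx⟩, And.right⟩
  · intro h K hK; rw [h K hK]; exact ⟨And.right, fun hx => ⟨hK, hx⟩⟩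

lemma atom_eq_atomOf {L A : Language α} (hA : IsAtomOf L A) {x : List α} (hx : x ∈ A) :
    A = atomOf L x := by
  obtain ⟨-, S, hS, rfl⟩ := hA
  ext y
  simp only [atomOf, Set.mem_setOf_eq]
  constructor
  · intro h K hK; exact (h K hK).trans (hx K hK).symm
  · intro h K hK; exact (h K hK).trans (hx K hK)

lemma atomOf_pos {L : Language α} {x : List α} (h : ∃ v, v ++ x ∈ L) :
    IsPositiveAtomOf L (atomOf L x) := by
  obtain ⟨v, hv⟩ := h
  exact ⟨isAtomOf_atomOf L x, leftQuot L v, ⟨v, rfl⟩, fun y hy => (mem_atomOf.1 hy v).2 hv⟩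

lemma pos_mem_quot {L A : Language α} (hA : IsPositiveAtomOf L A) {x : List α} (hx : x ∈ A) :
    ∃ v, v ++ x ∈ L := by
  obtain ⟨-, K, ⟨v, rfl⟩, hsub⟩ := hA
  exact ⟨v, hsub x hx⟩

lemma mem_saturated {L K : Language α} (hK : K ∈ quots L) {x y : List α}
    (hx : x ∈ K) (hy : y ∈ atomOf L x) : y ∈ K := (hy K hK).2 hx

lemma cons_mem_atomOf {L : Language α} {a : α} {x y : List α} (h : y ∈ atomOf L x) :
    (a :: y) ∈ atomOf L (a :: x) := by
  rw [mem_atomOf]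
  intro v
  have := mem_atomOf.1 h (v ++ [a])
  simpa [List.append_assoc] using this

lemma mem_posUnion {L : Language α} {x : List α} :
    x ∈ {w | ∃ A : Language α, IsPositiveAtomOf L A ∧ w ∈ A} ↔ ∃ v, v ++ x ∈ L := by
  constructor
  · rintro ⟨A, hA, hx⟩; exact pos_mem_quot hA hx
  · intro h; exact ⟨atomOf L x, atomOf_pos h, mem_atomOf_self L x⟩

/-- An atom is determined by the quotients containing it. -/
lemma atom_eq_sub {L A : Language α} (hA : IsAtomOf L A) :
    A = {y | ∀ K ∈ quots L, (y ∈ K ↔ ∀ z ∈ A, z ∈ K)} := by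
  obtain ⟨⟨x, hx⟩, S, hS, rfl⟩ := hA
  have hTK : ∀ K ∈ quots L,
      (K ∈ S ↔ ∀ z ∈ {y | ∀ K ∈ quots L, (y ∈ K ↔ K ∈ S)}, z ∈ K) := by
    intro K hK
    constructor
    · intro hKS z hz
      exact (hz K hK).2 hKS
    · intro hsub
      exact (hx K hK).1 (hsub x hx)
  ext y
  constructor
  · intro h K hK; exact (h K hK).trans (hTK K hK)
  · intro h K hK; exact (h K hK).trans (hTK K hK).symm

lemma quots_finite {L : Language α} (hL : L.IsRegular) : (quots L).Finite := by
  obtain ⟨σ₀, _, D, hD⟩ := hL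
  apply Set.Finite.subset
    (Set.finite_range (fun s : σ₀ => ({x | D.evalFrom s x ∈ D.accept} : Language α)))
  rintro K ⟨w, rfl⟩
  refine ⟨D.eval w, ?_⟩
  ext x
  have h1 : w ++ x ∈ L ↔ D.eval (w ++ x) ∈ D.accept := by
    rw [← hD]; exact DFA.mem_accepts D
  have h2 : D.eval (w ++ x) = D.evalFrom (D.eval w) x := by
    simp [DFA.eval, DFA.evalFrom, List.foldl_append]
  change D.evalFrom (D.eval w) x ∈ D.accept ↔ w ++ x ∈ L
  rw [h1, h2]

lemma posAtoms_finite {L : Language α} (hL : L.IsRegular) :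
    Finite {A : Language α // IsPositiveAtomOf L A} := by
  have hQ : (quots L).Finite := quots_finite hL
  haveI := hQ.to_subtype
  refine Finite.of_injective
    (fun A : {A : Language α // IsPositiveAtomOf L A} =>
      ({K | ∀ z ∈ A.1, z ∈ K.1} : Set (quots L))) ?_
  intro A B hAB
  have key : ∀ K ∈ quots L, ((∀ z ∈ A.1, z ∈ K) ↔ ∀ z ∈ B.1, z ∈ K) := by
    intro K hK
    have := Set.ext_iff.1 hAB ⟨K, hK⟩
    simpa using this
  apply Subtype.ext
  rw [atom_eq_sub A.2.1, atom_eq_sub B.2.1]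
  ext y
  constructor
  · intro h K hK
    exact (h K hK).trans (key K hK)
  · intro h K hK
    exact (h K hK).trans (key K hK).symm

section NFAaux

variable {σ : Type} (M : NFA α σ)

lemma stepSet_singleton (q : σ) (a : α) : M.stepSet {q} a = M.step q a := by
  simp [NFA.stepSet]

lemma evalFrom_cons (S : Set σ) (a : α) (w : List α) :
    M.evalFrom S (a :: w) = M.evalFrom (M.stepSet S a) w := rfl

lemma evalFrom_append (S : Set σ) (x y : List α) :
    M.evalFrom S (x ++ y) = M.evalFrom (M.evalFrom S x) y := by
  simp [NFA.evalFrom, List.foldl_append]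

lemma stepSet_mono {S T : Set σ} (h : S ⊆ T) (a : α) : M.stepSet S a ⊆ M.stepSet T a := by
  intro q hq
  rw [NFA.mem_stepSet] at hq ⊢
  obtain ⟨s, hs, hstep⟩ := hq
  exact ⟨s, h hs, hstep⟩

lemma evalFrom_mono {S T : Set σ} (h : S ⊆ T) (w : List α) :
    M.evalFrom S w ⊆ M.evalFrom T w := by
  induction w generalizing S T with
  | nil => exact h
  | cons a t ih => exact ih (stepSet_mono M h a)

lemma evalFrom_sound : ∀ {w : List α} {S : Set σ} {q : σ},
    q ∈ M.evalFrom S w → ∃ p ∈ S, q ∈ M.evalFrom {p} w := by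
  intro w
  induction w with
  | nil => exact fun h => ⟨_, h, rfl⟩
  | cons a t ih =>
    intro S q h
    rw [evalFrom_cons] at h
    obtain ⟨z, hz, hq⟩ := ih h
    rw [NFA.mem_stepSet] at hz
    obtain ⟨p, hp, hstep⟩ := hz
    refine ⟨p, hp, ?_⟩
    rw [evalFrom_cons]
    refine evalFrom_mono M ?_ t hq
    rw [Set.singleton_subset_iff, NFA.mem_stepSet]
    exact ⟨p, rfl, hstep⟩

lemma rightLang_subset_leftQuot {L : Language α} (hacc : M.accepts = L) {q : σ} {v : List α}
    (hq : q ∈ M.eval v) : ∀ u ∈ M.rightLang q, u ∈ leftQuot L v := by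
  rintro u ⟨p, hp, hpe⟩
  have hsub : M.evalFrom {q} u ⊆ M.eval (v ++ u) := by
    rw [NFA.eval, evalFrom_append]
    exact evalFrom_mono M (Set.singleton_subset_iff.2 hq) u
  have : v ++ u ∈ M.accepts := ⟨p, hp, hsub hpe⟩
  rwa [hacc] at this

end NFAaux

section BigNFA

variable (L : Language α)

/-- Abbreviation for the type of positive atoms. -/
local notation "PA" => {A : Language α // IsPositiveAtomOf L A}

/-- The union of the atoms in a set of positive atoms. -/
def Ust (X : Set {A : Language α // IsPositiveAtomOf L A}) : Language α :=
  {w | ∃ A ∈ X, w ∈ A.1}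

/-- The maximal trim reduced atomic NFA: states are the non-empty sets of positive atoms. -/
def bigNFA : NFA α {X : Set {A : Language α // IsPositiveAtomOf L A} // X.Nonempty} where
  step X a := {Y | ∀ u ∈ Ust L Y.1, (a :: u) ∈ Ust L X.1}
  start := {X | ∀ u ∈ Ust L X.1, u ∈ L}
  accept := {X | [] ∈ Ust L X.1}

variable {L}

lemma Ust_nonempty {X : Set PA} (hX : X.Nonempty) : ∃ w, w ∈ Ust L X := by
  obtain ⟨A, hA⟩ := hX
  obtain ⟨x, hx⟩ := A.2.1.1
  exact ⟨x, A, hA, hx⟩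

lemma Ust_saturated {X : Set PA} {x y : List α} (hx : x ∈ Ust L X)
    (hy : y ∈ atomOf L x) : y ∈ Ust L X := by
  obtain ⟨A, hA, hxA⟩ := hx
  refine ⟨A, hA, ?_⟩
  have := atom_eq_atomOf A.2.1 hxA
  rw [show (A : Language α) = atomOf L x from this]
  exact hy

lemma Ust_pos_suffix {X : Set PA} {x : List α} (hx : x ∈ Ust L X) : ∃ v, v ++ x ∈ L := by
  obtain ⟨A, _, hxA⟩ := hx
  exact pos_mem_quot A.2 hxA

lemma bigNFA_sound : ∀ {w : List α} {X Y : {X : Set PA // X.Nonempty}},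
    Y ∈ (bigNFA L).evalFrom {X} w → ∀ u ∈ Ust L Y.1, w ++ u ∈ Ust L X.1 := by
  intro w
  induction w with
  | nil =>
    intro X Y h u hu
    rw [NFA.evalFrom_nil, Set.mem_singleton_iff] at h
    subst h
    exact hu
  | cons a t ih =>
    intro X Y h u hu
    rw [evalFrom_cons, stepSet_singleton] at h
    obtain ⟨Z, hZ, hY⟩ := evalFrom_sound (bigNFA L) h
    have h1 : t ++ u ∈ Ust L Z.1 := ih hY u hu
    exact hZ (t ++ u) h1

lemma bigNFA_accept_complete : ∀ (w : List α) (X : {X : Set PA // X.Nonempty}),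
    w ∈ Ust L X.1 → ∃ Y ∈ (bigNFA L).evalFrom {X} w, [] ∈ Ust L Y.1 := by
  intro w
  induction w with
  | nil => exact fun X h => ⟨X, rfl, h⟩
  | cons a t ih =>
    intro X hw
    obtain ⟨v, hv⟩ := Ust_pos_suffix hw
    have hposet : IsPositiveAtomOf L (atomOf L t) := by
      refine atomOf_pos ⟨v ++ [a], ?_⟩
      simpa [List.append_assoc] using hv
    set Zt : {X : Set PA // X.Nonempty} :=
      ⟨{⟨atomOf L t, hposet⟩}, Set.singleton_nonempty _⟩ with hZt
    have hstep : Zt ∈ (bigNFA L).step X a := by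
      rintro u ⟨A, hAZ, huA⟩
      rw [Set.mem_singleton_iff] at hAZ
      subst hAZ
      exact Ust_saturated hw (cons_mem_atomOf huA)
    have ht : t ∈ Ust L Zt.1 := ⟨_, rfl, mem_atomOf_self L t⟩
    obtain ⟨Y, hY, hfin⟩ := ih Zt ht
    refine ⟨Y, ?_, hfin⟩
    rw [evalFrom_cons, stepSet_singleton]
    exact evalFrom_mono (bigNFA L) (Set.singleton_subset_iff.2 hstep) t hY

lemma bigNFA_rightLang (X : {X : Set PA // X.Nonempty}) :
    (bigNFA L).rightLang X = Ust L X.1 := by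
  ext w
  constructor
  · rintro ⟨Y, hYacc, hYev⟩
    have := bigNFA_sound hYev [] hYacc
    simpa using this
  · intro hw
    obtain ⟨Y, hY, hfin⟩ := bigNFA_accept_complete w X hw
    exact ⟨Y, hfin, hY⟩

lemma bigNFA_accepts : (bigNFA L).accepts = L := by
  ext w
  constructor
  · rintro ⟨Y, hacc, hev⟩
    obtain ⟨X, hXstart, hYX⟩ := evalFrom_sound (bigNFA L) hev
    have hw : w ++ [] ∈ Ust L X.1 := bigNFA_sound hYX [] hacc
    rw [List.append_nil] at hw
    exact hXstart w hw
  · intro hw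
    have hpos : IsPositiveAtomOf L (atomOf L w) := atomOf_pos ⟨[], by simpa using hw⟩
    set X₀ : {X : Set PA // X.Nonempty} :=
      ⟨{⟨atomOf L w, hpos⟩}, Set.singleton_nonempty _⟩ with hX₀
    have hstart : X₀ ∈ (bigNFA L).start := by
      rintro u ⟨A, hAX, huA⟩
      rw [Set.mem_singleton_iff] at hAX
      subst hAX
      exact mem_saturated (L_mem_quots L) hw huA
    have hwX : w ∈ Ust L X₀.1 := ⟨_, rfl, mem_atomOf_self L w⟩
    obtain ⟨Y, hY, hfin⟩ := bigNFA_accept_complete w X₀ hwX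
    exact ⟨Y, hfin, evalFrom_mono (bigNFA L) (Set.singleton_subset_iff.2 hstart) w hY⟩

lemma bigNFA_reach_complete : ∀ (t : List α) (a : α) (X Y : {X : Set PA // X.Nonempty}),
    (∀ u ∈ Ust L Y.1, (a :: t) ++ u ∈ Ust L X.1) → Y ∈ (bigNFA L).evalFrom {X} (a :: t) := by
  intro t
  induction t with
  | nil =>
    intro a X Y h
    rw [evalFrom_cons, stepSet_singleton, NFA.evalFrom_nil]
    intro u hu
    simpa using h u hu
  | cons b t' ih =>
    intro a X Y h
    have key : ∀ s : List α, (a :: s) ∈ Ust L X.1 →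
        IsPositiveAtomOf L (atomOf L s) ∧ ∀ u ∈ atomOf L s, (a :: u) ∈ Ust L X.1 := by
      intro s hs
      obtain ⟨A, hAX, hA⟩ := hs
      obtain ⟨v, hv⟩ := pos_mem_quot A.2 hA
      have hpos : IsPositiveAtomOf L (atomOf L s) :=
        atomOf_pos ⟨v ++ [a], by simpa [List.append_assoc] using hv⟩
      refine ⟨hpos, fun u hu => ⟨A, hAX, ?_⟩⟩
      rw [atom_eq_atomOf A.2.1 hA]
      exact cons_mem_atomOf hu
    obtain ⟨u₀, hu₀⟩ := Ust_nonempty Y.2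
    obtain ⟨hpos₀, hsub₀⟩ := key ((b :: t') ++ u₀) (h u₀ hu₀)
    set Zset : Set PA := {A | ∀ u ∈ A.1, (a :: u) ∈ Ust L X.1} with hZset
    have hzne : Zset.Nonempty := ⟨⟨atomOf L ((b :: t') ++ u₀), hpos₀⟩, hsub₀⟩
    set Z : {X : Set PA // X.Nonempty} := ⟨Zset, hzne⟩ with hZ
    have hZstep : Z ∈ (bigNFA L).step X a := by
      rintro u ⟨A, hAZ, huA⟩
      exact hAZ u huA
    have hYZ : ∀ u ∈ Ust L Y.1, (b :: t') ++ u ∈ Ust L Z.1 := by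
      intro u hu
      obtain ⟨hpos, hsub⟩ := key ((b :: t') ++ u) (h u hu)
      exact ⟨⟨atomOf L ((b :: t') ++ u), hpos⟩, hsub, mem_atomOf_self L _⟩
    have := ih b Z Y hYZ
    rw [evalFrom_cons, stepSet_singleton]
    exact evalFrom_mono (bigNFA L) (Set.singleton_subset_iff.2 hZstep) (b :: t') this

lemma Ust_inj {X Y : Set PA} (h : Ust L X = Ust L Y) : X = Y := by
  have key : ∀ X Y : Set PA, Ust L X = Ust L Y → X ⊆ Y := by
    intro X Y hXY A hA
    obtain ⟨x, hx⟩ := A.2.1.1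
    have : x ∈ Ust L Y := hXY ▸ ⟨A, hA, hx⟩
    obtain ⟨B, hB, hxB⟩ := this
    have hAB : A = B := Subtype.ext
      ((atom_eq_atomOf A.2.1 hx).trans (atom_eq_atomOf B.2.1 hxB).symm)
    rw [hAB]; exact hB
  exact Set.Subset.antisymm (key X Y h) (key Y X h.symm)

end BigNFA

lemma card_nonempty_subsets (P : Type) [Finite P] :
    Nat.card {X : Set P // X.Nonempty} = 2 ^ Nat.card P - 1 := by
  have := Fintype.ofFinite P
  classical
  rw [Nat.card_eq_fintype_card, Nat.card_eq_fintype_card]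
  have h1 : Fintype.card {X : Set P // X.Nonempty} = Fintype.card {X : Set P // ¬ X = ∅} :=
    Fintype.card_congr (Equiv.subtypeEquivRight fun X => by
      simp [Set.nonempty_iff_ne_empty])
  rw [h1, Fintype.card_subtype_compl, Fintype.card_subtype_eq, Fintype.card_set]

end Aux15

/-- A non-empty regular language `L` with `p` positive atoms has a trim
reduced atomic NFA with `2^p − 1` states iff some left quotient of `L` equals the union of all
positive atoms of `L`. -/
theorem max_size_atomic_nfa_iff {α : Type} [Finite α] {L : Language α} (hL : L.IsRegular)
    (hne : ∃ w, w ∈ L) :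
    (∃ (σ : Type) (_ : Finite σ) (M : NFA α σ),
        Nat.card σ = 2 ^ Nat.card {A : Language α // IsPositiveAtomOf L A} - 1 ∧
        M.accepts = L ∧ M.IsTrim ∧ M.IsReduced ∧ M.IsAtomic) ↔
      ∃ K ∈ quots L, K = {w | ∃ A : Language α, IsPositiveAtomOf L A ∧ w ∈ A} := by
  open Aux15 in
  obtain ⟨w₀, hw₀⟩ := hne
  haveI hPfin : Finite {A : Language α // IsPositiveAtomOf L A} := posAtoms_finite hL
  haveI hPne : Nonempty {A : Language α // IsPositiveAtomOf L A} :=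
    ⟨⟨atomOf L w₀, atomOf_pos ⟨[], by simpa using hw₀⟩⟩⟩
  constructor
  · rintro ⟨σ, finσ, M, hcard, hacc, htrim, hred, hatom⟩
    haveI := finσ
    have hrl : ∀ q, M.rightLang q
        = Ust L {A : {A : Language α // IsPositiveAtomOf L A} |
            ∀ z ∈ A.1, z ∈ M.rightLang q} := by
      intro q
      obtain ⟨𝒜, hpos, heq⟩ := hatom q
      rw [hacc] at hpos
      ext w
      constructor
      · intro hw
        have hw' := hw
        rw [heq] at hw'
        obtain ⟨B, hB, hwB⟩ := hw'
        refine ⟨⟨B, hpos B hB⟩, ?_, hwB⟩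
        intro z hz
        rw [heq]
        exact ⟨B, hB, hz⟩
      · rintro ⟨A, hA, hwA⟩
        exact hA w hwA
    have hgne : ∀ q : σ, ({A : {A : Language α // IsPositiveAtomOf L A} |
        ∀ z ∈ A.1, z ∈ M.rightLang q} : Set _).Nonempty := by
      intro q
      obtain ⟨w, hw⟩ := (htrim q).2
      rw [hrl q] at hw
      obtain ⟨A, hA, -⟩ := hw
      exact ⟨A, hA⟩
    let g : σ → {X : Set {A : Language α // IsPositiveAtomOf L A} // X.Nonempty} :=
      fun q => ⟨{A | ∀ z ∈ A.1, z ∈ M.rightLang q}, hgne q⟩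
    have hginj : Function.Injective g := by
      intro q q' hqq
      apply hred
      rw [hrl q, hrl q']
      exact congrArg (Ust L) (congrArg Subtype.val hqq)
    haveI := Fintype.ofFinite σ
    haveI := Fintype.ofFinite {X : Set {A : Language α // IsPositiveAtomOf L A} // X.Nonempty}
    have hbij : Function.Bijective g := by
      refine (Fintype.bijective_iff_injective_and_card g).2 ⟨hginj, ?_⟩
      rw [← Nat.card_eq_fintype_card, ← Nat.card_eq_fintype_card, hcard,
        card_nonempty_subsets]
    obtain ⟨qs, hqs⟩ := hbij.2 ⟨Set.univ, Set.univ_nonempty⟩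
    have hqs' : M.rightLang qs = {w | ∃ A : Language α, IsPositiveAtomOf L A ∧ w ∈ A} := by
      have hset : {A : {A : Language α // IsPositiveAtomOf L A} | ∀ z ∈ A.1, z ∈ M.rightLang qs}
          = Set.univ := congrArg Subtype.val hqs
      rw [hrl qs, hset]
      ext w
      constructor
      · rintro ⟨A, -, hw⟩; exact ⟨A.1, A.2, hw⟩
      · rintro ⟨A, hA, hw⟩; exact ⟨⟨A, hA⟩, Set.mem_univ _, hw⟩
    obtain ⟨v, hv⟩ := (htrim qs).1
    refine ⟨leftQuot L v, ⟨v, rfl⟩, ?_⟩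
    ext u
    constructor
    · intro hu
      exact ⟨atomOf L u, atomOf_pos ⟨v, hu⟩, mem_atomOf_self L u⟩
    · intro hu
      rw [← hqs'] at hu
      exact rightLang_subset_leftQuot M hacc hv u hu
  · rintro ⟨K, ⟨v, rfl⟩, hKU⟩
    refine ⟨{X : Set {A : Language α // IsPositiveAtomOf L A} // X.Nonempty}, Subtype.finite,
      bigNFA L, card_nonempty_subsets _, bigNFA_accepts, ?_, ?_, ?_⟩
    · -- trim
      intro X
      constructor
      · refine ⟨v, ?_⟩
        show X ∈ (bigNFA L).eval v
        cases v with
        | nil =>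
          show X ∈ (bigNFA L).start
          intro u hu
          have huL : u ∈ leftQuot L [] := by
            rw [hKU]
            obtain ⟨A, hA, huA⟩ := hu
            exact ⟨A.1, A.2, huA⟩
          rwa [leftQuot_nil] at huL
        | cons a t =>
          set X₀ : {X : Set {A : Language α // IsPositiveAtomOf L A} // X.Nonempty} :=
            ⟨{A | ∀ z ∈ A.1, z ∈ L}, ⟨⟨atomOf L w₀, atomOf_pos ⟨[], by simpa using hw₀⟩⟩,
              fun z hz => mem_saturated (L_mem_quots L) hw₀ hz⟩⟩ with hX₀
          have hstart : X₀ ∈ (bigNFA L).start := by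
            rintro u ⟨A, hA, huA⟩; exact hA u huA
          have hcond : ∀ u ∈ Ust L X.1, (a :: t) ++ u ∈ Ust L X₀.1 := by
            intro u hu
            have humem : u ∈ leftQuot L (a :: t) := by
              rw [hKU]
              obtain ⟨A, hA, huA⟩ := hu
              exact ⟨A.1, A.2, huA⟩
            have hz : (a :: t) ++ u ∈ L := humem
            exact ⟨⟨atomOf L ((a :: t) ++ u), atomOf_pos ⟨[], by simpa using hz⟩⟩,
              fun z hzz => mem_saturated (L_mem_quots L) hz hzz, mem_atomOf_self L _⟩
          have hreach := bigNFA_reach_complete t a X₀ X hcond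
          exact evalFrom_mono (bigNFA L) (Set.singleton_subset_iff.2 hstart) (a :: t) hreach
      · obtain ⟨w, hw⟩ := Ust_nonempty X.2
        refine ⟨w, ?_⟩
        rw [bigNFA_rightLang X]
        exact hw
    · -- reduced
      intro X Y hXY
      rw [bigNFA_rightLang, bigNFA_rightLang] at hXY
      exact Subtype.ext (Ust_inj hXY)
    · -- atomic
      intro X
      refine ⟨{B | ∃ A ∈ X.1, A.1 = B}, ?_, ?_⟩
      · rintro B ⟨A, -, rfl⟩
        rw [bigNFA_accepts]
        exact A.2
      · rw [bigNFA_rightLang]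
        ext w
        constructor
        · rintro ⟨A, hA, hw⟩; exact ⟨A.1, ⟨A, hA, rfl⟩, hw⟩
        · rintro ⟨B, ⟨A, hA, rfl⟩, hw⟩; exact ⟨A, hA, hw⟩
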